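/- Given S ∈ (0, 2π] and T ∈ (0, S), there exists a unique integer n ≥ 3 such that (n−1) sin(S/(n−1)) < T ≤ n sin(S/n) (interpreting the lower bound as 2 sin(S/2) for n = 3 when applicable). -/

import Mathlib

open Real

lemma mul_cos_lt_sin {x : ℝ} (hx : 0 < x) (hxπ : x < π) : x * Real.cos x < Real.sin x := by
  rcases lt_or_ge x (π / 2) with h | h
  · have hc : 0 < Real.cos x := Real.cos_pos_of_mem_Ioo ⟨by linarith [Real.pi_pos], h⟩
    have ht := Real.lt_tan hx h
    rw [Real.tan_eq_sin_div_cos] at ht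
    calc x * Real.cos x < (Real.sin x / Real.cos x) * Real.cos x := by
          exact mul_lt_mul_of_pos_right ht hc
      _ = Real.sin x := by field_simp
  · have hc : Real.cos x ≤ 0 :=
      Real.cos_nonpos_of_pi_div_two_le_of_le h (by linarith [Real.pi_pos])
    have hs : 0 < Real.sin x := Real.sin_pos_of_pos_of_lt_pi hx hxπ
    nlinarith

lemma sinc_strictAntiOn : StrictAntiOn (fun x : ℝ => Real.sin x / x) (Set.Ioc 0 π) := by
  apply strictAntiOn_of_deriv_neg (convex_Ioc 0 π)
  · exact Real.continuous_sin.continuousOn.div continuousOn_id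
      (fun x hx => ne_of_gt hx.1)
  · intro x hx
    rw [interior_Ioc] at hx
    have hx0 : x ≠ 0 := ne_of_gt hx.1
    have h : HasDerivAt (fun x : ℝ => Real.sin x / x)
        ((Real.cos x * x - Real.sin x * 1) / x ^ 2) x :=
      (Real.hasDerivAt_sin x).div (hasDerivAt_id x) hx0
    rw [h.deriv]
    apply div_neg_of_neg_of_pos
    · have := mul_cos_lt_sin hx.1 hx.2
      nlinarith
    · positivity

theorem exists_unique_n (S T : ℝ) (hS : S ∈ Set.Ioc 0 (2 * π)) (hT : T ∈ Set.Ioo 0 S) :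
    ∃! n : ℕ, 3 ≤ n ∧ (n = 3 ∨ ((n : ℝ) - 1) * Real.sin (S / (n - 1)) < T) ∧
      T ≤ n * Real.sin (S / n) := by
  classical
  obtain ⟨hS0, hS2π⟩ := hS
  obtain ⟨hT0, hTS⟩ := hT
  have hπ := Real.pi_pos
  -- key monotonicity
  have key : ∀ a b : ℝ, 2 ≤ a → a < b → a * Real.sin (S / a) < b * Real.sin (S / b) := by
    intro a b ha hab
    have ha0 : (0:ℝ) < a := by linarith
    have hb0 : (0:ℝ) < b := by linarith
    have hxa : S / a ≤ π := by
      rw [div_le_iff₀ ha0]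
      nlinarith
    have hxb : S / b < S / a := by
      apply div_lt_div_of_pos_left hS0 ha0 hab
    have hxb0 : 0 < S / b := div_pos hS0 hb0
    have := sinc_strictAntiOn ⟨hxb0, le_of_lt (lt_of_lt_of_le hxb hxa)⟩
      ⟨div_pos hS0 ha0, hxa⟩ hxb
    -- this : sin (S/a) / (S/a) < sin (S/b) / (S/b)
    have ha' : a * Real.sin (S / a) = S * (Real.sin (S / a) / (S / a)) := by
      field_simp
    have hb' : b * Real.sin (S / b) = S * (Real.sin (S / b) / (S / b)) := by
      field_simp
    rw [ha', hb']
    exact mul_lt_mul_of_pos_left this hS0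
  have keyle : ∀ a b : ℝ, 2 ≤ a → a ≤ b → a * Real.sin (S / a) ≤ b * Real.sin (S / b) := by
    intro a b ha hab
    rcases eq_or_lt_of_le hab with rfl | h
    · exact le_refl _
    · exact le_of_lt (key a b ha h)
  -- existence of some N with T ≤ N sin(S/N)
  have hex : ∃ n : ℕ, 3 ≤ n ∧ T ≤ (n : ℝ) * Real.sin (S / n) := by
    set N : ℕ := max 3 ⌈max S (S ^ 3 / (4 * (S - T)))⌉₊ with hNdef
    have hN3 : 3 ≤ N := le_max_left _ _
    have hceil : (⌈max S (S ^ 3 / (4 * (S - T)))⌉₊ : ℝ) ≤ (N : ℝ) := by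
      exact_mod_cast Nat.cast_le.mpr (le_max_right _ _)
    have hNS : S ≤ (N : ℝ) :=
      le_trans (le_trans (le_max_left _ _) (Nat.le_ceil _)) hceil
    have hNc : S ^ 3 / (4 * (S - T)) ≤ (N : ℝ) :=
      le_trans (le_trans (le_max_right _ _) (Nat.le_ceil _)) hceil
    have hN0 : (0:ℝ) < N := by
      have : (3:ℝ) ≤ N := by exact_mod_cast hN3
      linarith
    have hx0 : 0 < S / N := div_pos hS0 hN0
    have hx1 : S / N ≤ 1 := by rw [div_le_one hN0]; exact hNS
    have hsin : S / N - (S / N) ^ 3 / 4 < Real.sin (S / N) := by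
      have := Real.sin_gt_sub_cube hx0
      have := pow_pos hx0 3
      linarith
    have hId : (N : ℝ) * (S / N - (S / N) ^ 3 / 4) = S - S ^ 3 / (4 * N ^ 2) := by
      field_simp
    have h1 : S - S ^ 3 / (4 * N ^ 2) < (N : ℝ) * Real.sin (S / N) := by
      rw [← hId]
      exact mul_lt_mul_of_pos_left hsin hN0
    have h2 : T ≤ S - S ^ 3 / (4 * N ^ 2) := by
      have hST : 0 < S - T := by linarith
      have hN1 : (1:ℝ) ≤ N := by
        have : (3:ℝ) ≤ N := by exact_mod_cast hN3
        linarith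
      have hq : S ^ 3 / (4 * N ^ 2) ≤ S ^ 3 / (4 * N) := by
        apply div_le_div_of_nonneg_left (by positivity) (by positivity)
        nlinarith
      have hq2 : S ^ 3 / (4 * N) ≤ S - T := by
        rw [div_le_iff₀ (by positivity)]
        rw [div_le_iff₀ (by positivity)] at hNc
        nlinarith
      linarith
    exact ⟨N, hN3, le_of_lt (lt_of_le_of_lt (le_trans h2 (le_of_eq rfl)) h1)⟩
  -- take the minimal such N
  set n : ℕ := Nat.find hex with hn
  obtain ⟨hn3, hnT⟩ := Nat.find_spec hex
  have hprop : 3 ≤ n ∧ (n = 3 ∨ ((n : ℝ) - 1) * Real.sin (S / ((n : ℝ) - 1)) < T) ∧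
      T ≤ (n : ℝ) * Real.sin (S / n) := by
    refine ⟨hn3, ?_, hnT⟩
    rcases eq_or_lt_of_le hn3 with h3 | h4
    · exact Or.inl h3.symm
    · right
      have hlt : n - 1 < n := Nat.sub_lt (by omega) one_pos
      have hnp := Nat.find_min hex hlt
      push_neg at hnp
      have h3' : 3 ≤ n - 1 := by omega
      have := hnp h3'
      have hc : ((n - 1 : ℕ) : ℝ) = (n : ℝ) - 1 := by
        push_cast [Nat.cast_sub (by omega : 1 ≤ n)]; ring
      rw [hc] at this
      linarith
  -- helper for uniqueness
  have noboth : ∀ a b : ℕ,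
      (3 ≤ a ∧ (a = 3 ∨ ((a : ℝ) - 1) * Real.sin (S / ((a : ℝ) - 1)) < T) ∧
        T ≤ (a : ℝ) * Real.sin (S / a)) →
      (3 ≤ b ∧ (b = 3 ∨ ((b : ℝ) - 1) * Real.sin (S / ((b : ℝ) - 1)) < T) ∧
        T ≤ (b : ℝ) * Real.sin (S / b)) → a < b → False := by
    intro a b ⟨ha3, _, haT⟩ ⟨hb3, hbL, _⟩ hab
    have hb4 : 4 ≤ b := by omega
    rcases hbL with h3 | hlt
    · omega
    · have hcast : (a : ℝ) ≤ (b : ℝ) - 1 := by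
        have : a + 1 ≤ b := hab
        have : ((a : ℝ) + 1) ≤ (b : ℝ) := by exact_mod_cast this
        linarith
      have h2a : (2:ℝ) ≤ a := by exact_mod_cast le_trans (by norm_num) ha3
      have := keyle (a : ℝ) ((b : ℝ) - 1) h2a hcast
      linarith
  refine ⟨n, hprop, ?_⟩
  intro m hm
  rcases lt_trichotomy m n with h | h | h
  · exact absurd (noboth m n hm hprop h) (not_false)
  · exact h
  · exact absurd (noboth n m hprop hm h) (not_false)
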